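/- Let n₊, n₋ be positive real numbers and k a real number with S := 2(n₊²+n₋²) − k² > 0. Define q₁ = (n₋²−n₊²+k√S)/S, q₂ = (n₋²−n₊²−k√S)/S, and Δz = π√S/(n₊ n₋). Then the conical regularity conditions hold: (√Δ₊/2)·Δz = 2π/n₊ and (√Δ₋/2)·Δz = 2π/n₋, where Δ₊ = 4 + 4(q₁+q₂) + (q₁−q₂)² and Δ₋ = 4 − 4(q₁+q₂) + (q₁−q₂)². -/

import Mathlib

/-- Conical regularity conditions at the two poles of the spindle:
`(√Δ₊/2)·Δz = 2π/nplus` and `(√Δ₋/2)·Δz = 2π/nminus` for the quantised charges. -/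
theorem spindle_conical_regularity (nplus nminus k : ℝ) (hplus : 0 < nplus) (hminus : 0 < nminus)
    (hS : 0 < 2 * (nplus ^ 2 + nminus ^ 2) - k ^ 2)
    (q₁ q₂ Δz : ℝ)
    (hq₁ : q₁ = (nminus ^ 2 - nplus ^ 2 + k * Real.sqrt (2 * (nplus ^ 2 + nminus ^ 2) - k ^ 2)) /
      (2 * (nplus ^ 2 + nminus ^ 2) - k ^ 2))
    (hq₂ : q₂ = (nminus ^ 2 - nplus ^ 2 - k * Real.sqrt (2 * (nplus ^ 2 + nminus ^ 2) - k ^ 2)) /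
      (2 * (nplus ^ 2 + nminus ^ 2) - k ^ 2))
    (hΔz : Δz = Real.pi * Real.sqrt (2 * (nplus ^ 2 + nminus ^ 2) - k ^ 2) / (nplus * nminus)) :
    Real.sqrt (4 + 4 * (q₁ + q₂) + (q₁ - q₂) ^ 2) / 2 * Δz = 2 * Real.pi / nplus ∧
    Real.sqrt (4 - 4 * (q₁ + q₂) + (q₁ - q₂) ^ 2) / 2 * Δz = 2 * Real.pi / nminus := by
  set S := 2 * (nplus ^ 2 + nminus ^ 2) - k ^ 2 with hSdef
  have hr : 0 < Real.sqrt S := Real.sqrt_pos.mpr hS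
  have hr2 : Real.sqrt S ^ 2 = S := Real.sq_sqrt hS.le
  have hSne : S ≠ 0 := hS.ne'
  have hrne : Real.sqrt S ≠ 0 := hr.ne'
  have h1 : 4 + 4 * (q₁ + q₂) + (q₁ - q₂) ^ 2 = (4 * nminus / Real.sqrt S) ^ 2 := by
    subst hq₁ hq₂
    field_simp
    linear_combination (4 * S * (S + 2 * (nminus ^ 2 - nplus ^ 2)) + 4 * k ^ 2 * (Real.sqrt S ^ 2 + S)) * hr2 + (4 * S ^ 2) * hSdef
  have h2 : 4 - 4 * (q₁ + q₂) + (q₁ - q₂) ^ 2 = (4 * nplus / Real.sqrt S) ^ 2 := by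
    subst hq₁ hq₂
    field_simp
    linear_combination (4 * S * (S - 2 * (nminus ^ 2 - nplus ^ 2)) + 4 * k ^ 2 * (Real.sqrt S ^ 2 + S)) * hr2 + (4 * S ^ 2) * hSdef
  have hs1 : Real.sqrt (4 + 4 * (q₁ + q₂) + (q₁ - q₂) ^ 2) = 4 * nminus / Real.sqrt S := by
    rw [h1, Real.sqrt_sq (by positivity)]
  have hs2 : Real.sqrt (4 - 4 * (q₁ + q₂) + (q₁ - q₂) ^ 2) = 4 * nplus / Real.sqrt S := by
    rw [h2, Real.sqrt_sq (by positivity)]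
  constructor
  · rw [hs1, hΔz]; field_simp; ring
  · rw [hs2, hΔz]; field_simp; ring
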